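/- Let α > 0, r > 0 and let (z_j) be a sequence in ℂⁿ such that the balls D(z_j, r/2) cover ℂⁿ and the balls D(z_j, r/4) are pairwise disjoint. Then there are constants 0 < c ≤ C (depending on α, r, n) such that for all w ∈ ℂⁿ: c ≤ Σ_{j=1}^∞ e^{−α|z_j − w|²/2} ≤ C. -/

import Mathlib

open MeasureTheory Metric

/-- Two-sided uniform bound for the lattice Gaussian sum: if the balls `D(z_j, r/2)` cover `ℂⁿ`
and the balls `D(z_j, r/4)` are pairwise disjoint, then there are `0 < c ≤ C` with
`c ≤ Σ_j e^{−α|z_j − w|²/2} ≤ C` for all `w`. -/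
theorem lattice_gaussian_sum_bounds (n : ℕ) (α r : ℝ) (hα : 0 < α) (hr : 0 < r)
    (z : ℕ → EuclideanSpace ℂ (Fin n))
    (hcover : ∀ x : EuclideanSpace ℂ (Fin n), ∃ j, x ∈ ball (z j) (r / 2))
    (hdisj : Pairwise fun j k => Disjoint (ball (z j) (r / 4)) (ball (z k) (r / 4))) :
    ∃ c C : ℝ, 0 < c ∧ c ≤ C ∧
      ∀ w : EuclideanSpace ℂ (Fin n),
        c ≤ (∑' j : ℕ, Real.exp (-α * ‖z j - w‖ ^ 2 / 2)) ∧
        (∑' j : ℕ, Real.exp (-α * ‖z j - w‖ ^ 2 / 2)) ≤ C := by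
  borelize (EuclideanSpace ℂ (Fin n))
  letI : InnerProductSpace ℝ (EuclideanSpace ℂ (Fin n)) := InnerProductSpace.rclikeToReal ℂ _
  -- basic Gaussian integrability
  have hb : (0 : ℝ) < α / 4 := by positivity
  have hgint0 : Integrable (fun v : EuclideanSpace ℂ (Fin n) =>
      Real.exp (-(α / 4) * ‖v‖ ^ 2)) := by
    have h := GaussianFourier.integrable_cexp_neg_mul_sq_norm_add
      (V := EuclideanSpace ℂ (Fin n)) (b := ((α / 4 : ℝ) : ℂ)) (by simpa using hb) 0 0
    refine h.norm.congr (Filter.Eventually.of_forall fun v => ?_)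
    simp [Complex.norm_exp, ← Complex.ofReal_pow, ← Complex.ofReal_mul, ← Complex.ofReal_neg]
  set I0 : ℝ := ∫ v : EuclideanSpace ℂ (Fin n), Real.exp (-(α / 4) * ‖v‖ ^ 2) with hI0def
  set v0 : ℝ := (volume (ball (0 : EuclideanSpace ℂ (Fin n)) (r / 4))).toReal with hv0def
  have hv0 : 0 < v0 :=
    ENNReal.toReal_pos (measure_ball_pos _ _ (by positivity)).ne' measure_ball_lt_top.ne
  set K : ℝ := Real.exp (α * (r / 4) ^ 2 / 2) with hKdef
  set C : ℝ := K * I0 / v0 with hCdef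
  -- the key finite-sum upper bound
  have key : ∀ (w : EuclideanSpace ℂ (Fin n)) (F : Finset ℕ),
      ∑ j ∈ F, Real.exp (-α * ‖z j - w‖ ^ 2 / 2) ≤ C := by
    intro w F
    have hg : Integrable (fun x : EuclideanSpace ℂ (Fin n) =>
        Real.exp (-(α / 4) * ‖x - w‖ ^ 2)) := hgint0.comp_sub_right w
    have hInt : (∫ x : EuclideanSpace ℂ (Fin n), Real.exp (-(α / 4) * ‖x - w‖ ^ 2)) = I0 :=
      integral_sub_right_eq_self (fun v => Real.exp (-(α / 4) * ‖v‖ ^ 2)) w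
    have hball : ∀ j, v0 * Real.exp (-α * ‖z j - w‖ ^ 2 / 2)
        ≤ ∫ x in ball (z j) (r / 4), K * Real.exp (-(α / 4) * ‖x - w‖ ^ 2) := by
      intro j
      have hmeas : volume (ball (z j) (r / 4)) =
          volume (ball (0 : EuclideanSpace ℂ (Fin n)) (r / 4)) :=
        Measure.addHaar_ball_center volume (z j) (r / 4)
      have h1 : v0 * Real.exp (-α * ‖z j - w‖ ^ 2 / 2)
          = ∫ _x in ball (z j) (r / 4), Real.exp (-α * ‖z j - w‖ ^ 2 / 2) := by
        rw [setIntegral_const, measureReal_def, hmeas, smul_eq_mul, hv0def]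
      rw [h1]
      refine setIntegral_mono_on
        (integrableOn_const measure_ball_lt_top.ne)
        ((hg.const_mul K).integrableOn) measurableSet_ball ?_
      intro x hx
      have hxz : dist x (z j) < r / 4 := mem_ball.1 hx
      have ht : ‖x - w‖ ≤ dist x (z j) + ‖z j - w‖ := by
        rw [← dist_eq_norm, ← dist_eq_norm]; exact dist_triangle x (z j) w
      have ht' : ‖x - w‖ ≤ r / 4 + ‖z j - w‖ := le_trans ht (by linarith)
      rw [hKdef, ← Real.exp_add, Real.exp_le_exp]
      have h2 : ‖x - w‖ ^ 2 ≤ (r / 4 + ‖z j - w‖) ^ 2 := by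
        nlinarith [norm_nonneg (x - w)]
      have h3 : (r / 4 + ‖z j - w‖) ^ 2 ≤ 2 * (r / 4) ^ 2 + 2 * ‖z j - w‖ ^ 2 := by
        nlinarith [sq_nonneg (r / 4 - ‖z j - w‖)]
      nlinarith [mul_le_mul_of_nonneg_left (h2.trans h3) hα.le]
    have hsum_int : ∑ j ∈ F, ∫ x in ball (z j) (r / 4), K * Real.exp (-(α / 4) * ‖x - w‖ ^ 2)
        = ∫ x in ⋃ j ∈ F, ball (z j) (r / 4), K * Real.exp (-(α / 4) * ‖x - w‖ ^ 2) :=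
      (integral_biUnion_finset F (fun j _ => measurableSet_ball)
        (hdisj.set_pairwise _) (fun j _ => (hg.const_mul K).integrableOn)).symm
    have hle : (∫ x in ⋃ j ∈ F, ball (z j) (r / 4), K * Real.exp (-(α / 4) * ‖x - w‖ ^ 2))
        ≤ ∫ x : EuclideanSpace ℂ (Fin n), K * Real.exp (-(α / 4) * ‖x - w‖ ^ 2) :=
      setIntegral_le_integral (hg.const_mul K)
        (Filter.Eventually.of_forall fun x => by positivity)
    have htot : (∫ x : EuclideanSpace ℂ (Fin n), K * Real.exp (-(α / 4) * ‖x - w‖ ^ 2))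
        = K * I0 := by rw [integral_const_mul, hInt]
    have hfin : v0 * ∑ j ∈ F, Real.exp (-α * ‖z j - w‖ ^ 2 / 2) ≤ K * I0 := by
      rw [Finset.mul_sum]
      calc ∑ j ∈ F, v0 * Real.exp (-α * ‖z j - w‖ ^ 2 / 2)
          ≤ ∑ j ∈ F, ∫ x in ball (z j) (r / 4), K * Real.exp (-(α / 4) * ‖x - w‖ ^ 2) :=
            Finset.sum_le_sum fun j _ => hball j
        _ = _ := hsum_int
        _ ≤ _ := hle
        _ = K * I0 := htot
    rw [hCdef, le_div_iff₀ hv0]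
    linarith [hfin]
  -- summability and the two bounds
  have hsum : ∀ w : EuclideanSpace ℂ (Fin n),
      Summable (fun j => Real.exp (-α * ‖z j - w‖ ^ 2 / 2)) := fun w =>
    summable_of_sum_le (fun j => Real.exp_nonneg _) (key w)
  have hub : ∀ w : EuclideanSpace ℂ (Fin n),
      (∑' j : ℕ, Real.exp (-α * ‖z j - w‖ ^ 2 / 2)) ≤ C := fun w =>
    Summable.tsum_le_of_sum_le (hsum w) (key w)
  have hlb : ∀ w : EuclideanSpace ℂ (Fin n),
      Real.exp (-α * (r / 2) ^ 2 / 2) ≤ ∑' j : ℕ, Real.exp (-α * ‖z j - w‖ ^ 2 / 2) := by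
    intro w
    obtain ⟨j, hj⟩ := hcover w
    have hd : ‖z j - w‖ < r / 2 := by
      rw [← dist_eq_norm, dist_comm]; exact mem_ball.1 hj
    have h1 : Real.exp (-α * (r / 2) ^ 2 / 2) ≤ Real.exp (-α * ‖z j - w‖ ^ 2 / 2) := by
      rw [Real.exp_le_exp]
      have h2 : ‖z j - w‖ ^ 2 ≤ (r / 2) ^ 2 := by nlinarith [norm_nonneg (z j - w)]
      nlinarith [mul_le_mul_of_nonneg_left h2 hα.le]
    exact h1.trans (Summable.le_tsum (hsum w) j fun i _ => Real.exp_nonneg _)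
  exact ⟨Real.exp (-α * (r / 2) ^ 2 / 2), C, Real.exp_pos _, (hlb 0).trans (hub 0),
    fun w => ⟨hlb w, hub w⟩⟩
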